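/- Let 𝒯 be a category, 𝒫 a full subcategory of 𝒯, X an object of 𝒯, and suppose given 𝒫-expansion data for X indexed by the natural numbers (an inverse sequence): an inverse system (X_n, p_{n n'}, ℕ) with all X_n in 𝒫 and morphisms p_n : X → X_n with p_{n n'} ∘ p_{n'} = p_n for n ≤ n', satisfying conditions (AE1) and (AE2). Then the comma category X_𝒫 of X over 𝒫 is uniformly movable if and only if it is movable. -/

import Mathlib

open CategoryTheory

/-- An object `X` of a category is *movable* if there exist an object `M` and a morphism
`m : M ⟶ X` such that every morphism `p : Y ⟶ X` admits `u : M ⟶ Y` with `u ≫ p = m`. -/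
def Movable {K : Type*} [Category K] (X : K) : Prop :=
  ∃ (M : K) (m : M ⟶ X), ∀ (Y : K) (p : Y ⟶ X), ∃ u : M ⟶ Y, u ≫ p = m

/-- An object `X` of a category is *uniformly movable* if there exist an object `M`, a morphism
`m : M ⟶ X`, and an assignment `u` sending each `p : Y ⟶ X` to `u Y p : M ⟶ Y` with
(1) `u Y p ≫ p = m` and (2) `u Y p = u Z q ≫ r` whenever `r ≫ p = q`. -/
def UniformlyMovable {K : Type*} [Category K] (X : K) : Prop :=
  ∃ (M : K) (m : M ⟶ X) (u : ∀ Y : K, (Y ⟶ X) → (M ⟶ Y)),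
    (∀ (Y : K) (p : Y ⟶ X), u Y p ≫ p = m) ∧
    (∀ (Y Z : K) (p : Y ⟶ X) (q : Z ⟶ X) (r : Z ⟶ Y), r ≫ p = q → u Y p = u Z q ≫ r)

/-- If `X` admits a `𝒫`-expansion indexed by an inverse sequence (over `ℕ`), then the comma
category `X_𝒫` is uniformly movable if and only if it is movable. -/
theorem comma_uniformlyMovable_iff_movable_of_sequence
    {T : Type*} [Category T] (P : T → Prop) (X : T)
    (XX : ℕ → T) (hXP : ∀ n : ℕ, P (XX n))
    (bond : ∀ {n n' : ℕ}, n ≤ n' → (XX n' ⟶ XX n))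
    (bond_refl : ∀ n : ℕ, bond (le_refl n) = 𝟙 (XX n))
    (bond_comp : ∀ {n n' n'' : ℕ} (h : n ≤ n') (h' : n' ≤ n''),
      bond h' ≫ bond h = bond (h.trans h'))
    (pp : ∀ n : ℕ, X ⟶ XX n)
    (pp_comp : ∀ {n n' : ℕ} (h : n ≤ n'), pp n' ≫ bond h = pp n)
    (AE1 : ∀ (Q : T), P Q → ∀ f : X ⟶ Q, ∃ (n : ℕ) (fn : XX n ⟶ Q), pp n ≫ fn = f)
    (AE2 : ∀ (n : ℕ) (Q : T), P Q → ∀ f g : XX n ⟶ Q, pp n ≫ f = pp n ≫ g →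
      ∃ (n' : ℕ) (h : n ≤ n'), bond h ≫ f = bond h ≫ g) :
    (∀ Y : StructuredArrow X (ObjectProperty.ι P), UniformlyMovable Y) ↔
    (∀ Y : StructuredArrow X (ObjectProperty.ι P), Movable Y) := by
  constructor
  · intro h Y
    obtain ⟨M, m, u, h1, _⟩ := h Y
    exact ⟨M, m, fun Z p => ⟨u Z p, h1 Z p⟩⟩
  · intro hmov
    -- Step 1: each `pp n` is movable with witness a bond map.
    have claimA : ∀ n : ℕ, ∃ (s' : ℕ) (hns : n ≤ s'),
        ∀ (Q : T), P Q → ∀ (f : X ⟶ Q) (p : Q ⟶ XX n), f ≫ p = pp n →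
          ∃ u : XX s' ⟶ Q, pp s' ≫ u = f ∧ u ≫ p = bond hns := by
      intro n
      obtain ⟨M, m, hlift⟩ := hmov (StructuredArrow.mk (T := ObjectProperty.ι P)
        (Y := ObjectProperty.FullSubcategory.mk (XX n) (hXP n)) (pp n))
      obtain ⟨N, e, he⟩ := AE1 M.right.obj M.right.property M.hom
      have hm : M.hom ≫ (ObjectProperty.ι P).map m.right = pp n := StructuredArrow.w m
      have hcomma : pp (max N n) ≫
          (bond (le_max_left N n) ≫ (e ≫ (ObjectProperty.ι P).map m.right)) =
          pp (max N n) ≫ bond (le_max_right N n) := by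
        simp only [← Category.assoc]
        rw [pp_comp, pp_comp, he]
        exact hm
      obtain ⟨n', hmn', heq⟩ := AE2 (max N n) (XX n) (hXP n) _ _ hcomma
      simp only [← Category.assoc] at heq
      rw [bond_comp, bond_comp] at heq
      refine ⟨n', (le_max_right N n).trans hmn', ?_⟩
      intro Q hQ f p hp
      obtain ⟨u0, hu0⟩ := hlift (StructuredArrow.mk (T := ObjectProperty.ι P) (Y := ObjectProperty.FullSubcategory.mk Q hQ) f)
        (StructuredArrow.homMk (InducedCategory.homMk p) hp)
      have hw : M.hom ≫ (ObjectProperty.ι P).map u0.right = f := StructuredArrow.w u0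
      have h5 : (ObjectProperty.ι P).map u0.right ≫ p
          = (ObjectProperty.ι P).map m.right := by
        have := congrArg (ObjectProperty.ι P).map (congrArg CommaMorphism.right hu0)
        simp only [Comma.comp_right, StructuredArrow.homMk_right, Functor.map_comp,
          ObjectProperty.ι_map, InducedCategory.comp_hom, InducedCategory.homMk_hom] at this ⊢
        exact this
      refine ⟨bond ((le_max_left N n).trans hmn') ≫
        (e ≫ (ObjectProperty.ι P).map u0.right), ?_, ?_⟩
      · simp only [← Category.assoc]
        rw [pp_comp, he]
        exact hw
      · rw [Category.assoc, Category.assoc, h5]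
        simp only [← Category.assoc]
        exact heq
    choose s hs lift using claimA
    -- Step 2: Mittag-Leffler style construction of a coherent family from `XX (s 0)`.
    have stab : ∀ (k k'' : ℕ) (h : s k ≤ k'') (f : XX (s 0) ⟶ XX (s k)),
        pp (s 0) ≫ f = pp (s k) →
        ∃ g : XX (s 0) ⟶ XX k'', pp (s 0) ≫ g = pp k'' ∧
          g ≫ bond ((hs k).trans h) = f ≫ bond (hs k) := by
      intro k k'' h f hf
      obtain ⟨u, hu1, hu2⟩ := lift k (XX k'') (hXP k'') (pp k'')
        (bond ((hs k).trans h)) (pp_comp _)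
      exact ⟨f ≫ u, by rw [← Category.assoc, hf, hu1],
        by rw [Category.assoc, hu2]⟩
    have chain : ∃ c : ∀ k : ℕ, XX (s 0) ⟶ XX k, (∀ k, pp (s 0) ≫ c k = pp k) ∧
        ∀ k, c (k+1) ≫ bond (Nat.le_succ k) = c k := by
      let D : ℕ → Type _ := fun k => {f : XX (s 0) ⟶ XX k //
        pp (s 0) ≫ f = pp k ∧
        ∃ h' : XX (s 0) ⟶ XX (s k), pp (s 0) ≫ h' = pp (s k) ∧ h' ≫ bond (hs k) = f}
      have d0 : D 0 :=
        ⟨bond (hs 0), pp_comp _, 𝟙 _, by simp, by simp⟩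
      have step : ∀ k (d : D k), ∃ d' : D (k+1), d'.1 ≫ bond (Nat.le_succ k) = d.1 := by
        intro k d
        obtain ⟨f, hf, h', hh'1, hh'2⟩ := d
        obtain ⟨g, hg1, hg2⟩ := stab k (max (s k) (s (k+1))) (le_max_left _ _) h' hh'1
        have hk1 : (k+1 : ℕ) ≤ max (s k) (s (k+1)) := (hs (k+1)).trans (le_max_right _ _)
        refine ⟨⟨g ≫ bond hk1, ?_, g ≫ bond (le_max_right _ _), ?_, ?_⟩, ?_⟩
        · rw [← Category.assoc, hg1, pp_comp]
        · rw [← Category.assoc, hg1, pp_comp]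
        · rw [Category.assoc, bond_comp]
        · show (g ≫ bond hk1) ≫ bond (Nat.le_succ k) = f
          rw [Category.assoc, bond_comp]
          exact hg2.trans hh'2
      let ch : ∀ k, D k := fun k => Nat.rec d0 (fun k ih => (step k ih).choose) k
      exact ⟨fun k => (ch k).1, fun k => (ch k).2.1,
        fun k => (step k (ch k)).choose_spec⟩
    obtain ⟨c, hc, hcs⟩ := chain
    have coh : ∀ (k k' : ℕ) (h : k ≤ k'), c k' ≫ bond h = c k := by
      intro k k' h
      induction k', h using Nat.le_induction with
      | base => rw [bond_refl]; exact Category.comp_id _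
      | succ k' hk ih =>
        have : c (k'+1) ≫ bond (hk.trans (Nat.le_succ k')) = c k := by
          rw [← bond_comp hk (Nat.le_succ k'), ← Category.assoc, hcs k', ih]
        exact this
    -- Step 3: uniqueness lemma via AE2.
    have uniq : ∀ (Q : T), P Q → ∀ (j k : ℕ) (t : XX j ⟶ Q) (t' : XX k ⟶ Q),
        pp j ≫ t = pp k ≫ t' → c j ≫ t = c k ≫ t' := by
      intro Q hQ j k t t' hE
      obtain ⟨l', hl', heq⟩ := AE2 (max j k) Q hQ (bond (le_max_left j k) ≫ t)
        (bond (le_max_right j k) ≫ t')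
        (by rw [← Category.assoc, ← Category.assoc, pp_comp, pp_comp, hE])
      simp only [← Category.assoc] at heq
      rw [bond_comp, bond_comp] at heq
      calc c j ≫ t = (c l' ≫ bond ((le_max_left j k).trans hl')) ≫ t := by rw [coh]
        _ = (c l' ≫ bond ((le_max_right j k).trans hl')) ≫ t' := by
            rw [Category.assoc, Category.assoc, heq]
        _ = c k ≫ t' := by rw [coh]
    -- Step 4: assemble uniform movability.
    intro Y
    choose jj ss hss using
      fun Z : StructuredArrow X (ObjectProperty.ι P) =>
        AE1 Z.right.obj Z.right.property Z.hom
    have hmZ : ∀ Z : StructuredArrow X (ObjectProperty.ι P),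
        pp (s 0) ≫ (c (jj Z) ≫ ss Z) = Z.hom := fun Z => by
      rw [← Category.assoc, hc, hss]
    let M : StructuredArrow X (ObjectProperty.ι P) :=
      StructuredArrow.mk (T := ObjectProperty.ι P)
        (Y := ObjectProperty.FullSubcategory.mk (XX (s 0)) (hXP (s 0))) (pp (s 0))
    let mg0 : ∀ Z : StructuredArrow X (ObjectProperty.ι P),
        XX (s 0) ⟶ Z.right.obj := fun Z => c (jj Z) ≫ ss Z
    let mg : ∀ Z : StructuredArrow X (ObjectProperty.ι P),
        (ObjectProperty.FullSubcategory.mk (XX (s 0)) (hXP (s 0)) : ObjectProperty.FullSubcategory P) ⟶ Z.right := fun Z => InducedCategory.homMk (mg0 Z)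
    let mh : ∀ Z : StructuredArrow X (ObjectProperty.ι P), M ⟶ Z := fun Z =>
      StructuredArrow.homMk (mg Z) (hmZ Z)
    have key : ∀ (Z W : StructuredArrow X (ObjectProperty.ι P)) (r : W ⟶ Z),
        mh W ≫ r = mh Z := by
      intro Z W r
      apply StructuredArrow.hom_ext
      apply ObjectProperty.hom_ext
      have hw : pp (jj W) ≫ (ss W ≫ (ObjectProperty.ι P).map r.right) = Z.hom := by
        rw [← Category.assoc, hss]; exact StructuredArrow.w r
      have hu := uniq Z.right.obj Z.right.property (jj W) (jj Z)
        (ss W ≫ (ObjectProperty.ι P).map r.right) (ss Z) (by rw [hw, hss])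
      show ((c (jj W) ≫ ss W) ≫ (ObjectProperty.ι P).map r.right
          : XX (s 0) ⟶ Z.right.obj) = c (jj Z) ≫ ss Z
      rw [Category.assoc]
      exact hu
    exact ⟨M, mh Y, fun Z _ => mh Z, fun Z p => key Y Z p,
      fun Z W p q r _ => (key Z W r).symm⟩
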